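/- For even q there is a group isomorphism SO_{2m+1}(q) → Sp_{2m}(q) given by mapping each matrix A to the matrix obtained from A by removing the middle row and the middle column. -/
import Mathlib


open Matrix

/-- The quadratic form `Q_{2m+1}(v) = v_0^2 + ∑_{j=1}^m v_j v_j'` on `F^(2m+1)`,
with coordinates ordered `(v_m, …, v_1, v_0, v_1', …, v_m')`. -/
def Qodd (F : Type*) [Field F] (m : ℕ) (v : Fin (2 * m + 1) → F) : F :=
  v ⟨m, by omega⟩ ^ 2 +
    ∑ j : Fin m, v (Fin.castLE (by omega) j) * v ⟨2 * m - (j : ℕ), by omega⟩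

/-- The embedding `Fin (2m) → Fin (2m+1)` skipping the middle index `m`. -/
def skipMid (m : ℕ) (i : Fin (2 * m)) : Fin (2 * m + 1) :=
  if h : (i : ℕ) < m then ⟨i, by omega⟩ else ⟨(i : ℕ) + 1, by have := i.isLt; omega⟩

/-- Removing the middle row and the middle column of a `(2m+1) × (2m+1)` matrix. -/
def removeMid {F : Type*} [Field F] (m : ℕ)
    (A : Matrix (Fin (2 * m + 1)) (Fin (2 * m + 1)) F) :
    Matrix (Fin (2 * m)) (Fin (2 * m)) F :=
  Matrix.of fun i j => A (skipMid m i) (skipMid m j)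

/-- The anti-diagonal matrix `J_{2m}`. -/
def Jsymp (F : Type*) [Field F] (m : ℕ) : Matrix (Fin (2 * m)) (Fin (2 * m)) F :=
  fun i j => if (i : ℕ) + (j : ℕ) = 2 * m - 1 then 1 else 0

namespace RmAux

/-- the middle index -/
def mid (m : ℕ) : Fin (2 * m + 1) := ⟨m, by omega⟩

lemma skipMid_val {m : ℕ} (i : Fin (2 * m)) :
    ((skipMid m i : Fin (2 * m + 1)) : ℕ) = if (i : ℕ) < m then (i : ℕ) else (i : ℕ) + 1 := by
  unfold skipMid; split <;> rfl

lemma skipMid_ne_mid {m : ℕ} (i : Fin (2 * m)) : skipMid m i ≠ mid m := by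
  intro h
  have := congrArg Fin.val h
  rw [skipMid_val] at this
  simp only [mid] at this
  split at this <;> omega

lemma skipMid_eq_succAbove {m : ℕ} (i : Fin (2 * m)) :
    skipMid m i = (mid m).succAbove i := by
  apply Fin.ext
  rw [skipMid_val, Fin.succAbove]
  rcases lt_or_ge (i : ℕ) m with h | h
  · rw [if_pos h, if_pos (by simpa [Fin.lt_def, mid] using h)]; rfl
  · rw [if_neg (by omega), if_neg (by simp [Fin.lt_def, mid]; omega)]; rfl

lemma sum_skip {M : Type*} [AddCommMonoid M] {m : ℕ} (f : Fin (2 * m + 1) → M) :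
    ∑ k, f k = f (mid m) + ∑ i : Fin (2 * m), f (skipMid m i) := by
  simp_rw [skipMid_eq_succAbove]
  exact Fin.sum_univ_succAbove f (mid m)

/-- the splitting equivalence for `Fin (2m)` -/
def e2 (m : ℕ) : Fin m ⊕ Fin m ≃ Fin (2 * m) where
  toFun s := match s with
    | Sum.inl j => ⟨(j : ℕ), by omega⟩
    | Sum.inr j => ⟨2 * m - 1 - (j : ℕ), by omega⟩
  invFun l := if h : (l : ℕ) < m then Sum.inl ⟨(l : ℕ), h⟩ else Sum.inr ⟨2 * m - 1 - (l : ℕ), by have := l.isLt; omega⟩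
  left_inv s := by
    rcases s with j | j
    · have := j.isLt
      dsimp only
      rw [dif_pos this]
    · have := j.isLt
      dsimp only
      rw [dif_neg (by omega)]
      simp only [Sum.inr.injEq]
      exact Fin.ext (by simp; omega)
  right_inv l := by
    have := l.isLt
    dsimp only
    by_cases h : (l : ℕ) < m
    · rw [dif_pos h]
    · rw [dif_neg h]
      exact Fin.ext (by simp; omega)

lemma sum2m {M : Type*} [AddCommMonoid M] {m : ℕ} (f : Fin (2 * m) → M) :
    ∑ l, f l = ∑ j : Fin m, (f ⟨(j : ℕ), by omega⟩ + f ⟨2 * m - 1 - (j : ℕ), by omega⟩) := by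
  rw [← Equiv.sum_comp (e2 m) f, Fintype.sum_sum_type, ← Finset.sum_add_distrib]
  exact Finset.sum_congr rfl fun j _ => rfl


def lo (m : ℕ) (j : Fin m) : Fin (2 * m + 1) := Fin.castLE (by omega) j
def hi (m : ℕ) (j : Fin m) : Fin (2 * m + 1) := ⟨2 * m - (j : ℕ), by omega⟩

lemma lo_val {m : ℕ} (j : Fin m) : ((lo m j : Fin (2 * m + 1)) : ℕ) = (j : ℕ) := rfl
lemma hi_val {m : ℕ} (j : Fin m) : ((hi m j : Fin (2 * m + 1)) : ℕ) = 2 * m - (j : ℕ) := rfl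

lemma lo_ne_mid {m : ℕ} (j : Fin m) : lo m j ≠ mid m := by
  have := j.isLt
  simp only [Fin.ne_iff_vne, lo_val, mid]
  omega

lemma hi_ne_mid {m : ℕ} (j : Fin m) : hi m j ≠ mid m := by
  have := j.isLt
  simp only [Fin.ne_iff_vne, hi_val, mid]
  omega

lemma lo_ne_hi {m : ℕ} (j j' : Fin m) : lo m j ≠ hi m j' := by
  have := j.isLt
  have := j'.isLt
  simp only [Fin.ne_iff_vne, lo_val, hi_val]
  omega

lemma skipA {m : ℕ} (j : Fin m) : skipMid m ⟨(j : ℕ), by omega⟩ = lo m j := by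
  have := j.isLt
  exact Fin.ext (by rw [skipMid_val, lo_val]; simp only [Fin.val_mk]; split <;> omega)

lemma skipB {m : ℕ} (j : Fin m) : skipMid m ⟨2 * m - 1 - (j : ℕ), by omega⟩ = hi m j := by
  have := j.isLt
  exact Fin.ext (by rw [skipMid_val, hi_val]; simp only [Fin.val_mk]; split <;> omega)

variable {F : Type*} [Field F] {m : ℕ}

lemma Qodd_def (v : Fin (2 * m + 1) → F) :
    Qodd F m v = v (mid m) ^ 2 + ∑ j : Fin m, v (lo m j) * v (hi m j) := rfl

/-- the polar bilinear form of `Qodd` -/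
def Bf (m : ℕ) (u v : Fin (2 * m + 1) → F) : F :=
  ∑ j : Fin m, (u (lo m j) * v (hi m j) + u (hi m j) * v (lo m j))

lemma polar (h2 : (2 : F) = 0) (u v : Fin (2 * m + 1) → F) :
    Qodd F m (u + v) = Qodd F m u + Qodd F m v + Bf m u v := by
  simp only [Qodd_def, Bf, Pi.add_apply]
  have hsum : ∑ j : Fin m, (u (lo m j) + v (lo m j)) * (u (hi m j) + v (hi m j))
      = (∑ j : Fin m, u (lo m j) * u (hi m j)) + ((∑ j : Fin m, v (lo m j) * v (hi m j))
        + ∑ j : Fin m, (u (lo m j) * v (hi m j) + u (hi m j) * v (lo m j))) := by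
    rw [← Finset.sum_add_distrib, ← Finset.sum_add_distrib]
    exact Finset.sum_congr rfl fun j _ => by ring
  rw [hsum]
  have h4 : (u (mid m) + v (mid m)) ^ 2 = u (mid m) ^ 2 + v (mid m) ^ 2 := by
    linear_combination (u (mid m) * v (mid m)) * h2
  rw [h4]
  ring

lemma sq_injF (h2 : (2 : F) = 0) {a b : F} (h : a ^ 2 = b ^ 2) : a = b := by
  have h0 : (a - b) * (a - b) = 0 := by linear_combination h + (b ^ 2 - a * b) * h2
  exact sub_eq_zero.mp (mul_self_eq_zero.mp h0)

lemma sq_surjF [Fintype F] (h2 : (2 : F) = 0) (a : F) : ∃ b : F, b ^ 2 = a := by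
  have hinj : Function.Injective (fun x : F => x ^ 2) := fun x y h => sq_injF h2 h
  exact Finite.injective_iff_surjective.mp hinj a

lemma Qodd_zero : Qodd F m 0 = 0 := by simp [Qodd_def]

lemma Qodd_smul (c : F) (v : Fin (2 * m + 1) → F) :
    Qodd F m (c • v) = c ^ 2 * Qodd F m v := by
  simp only [Qodd_def, Pi.smul_apply, smul_eq_mul]
  rw [mul_add, Finset.mul_sum, mul_pow]
  congr 1
  exact Finset.sum_congr rfl fun j _ => by ring

lemma Bf_inv (h2 : (2 : F) = 0) (A : Matrix (Fin (2 * m + 1)) (Fin (2 * m + 1)) F)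
    (hQ : ∀ v, Qodd F m (A *ᵥ v) = Qodd F m v) (u v : Fin (2 * m + 1) → F) :
    Bf m (A *ᵥ u) (A *ᵥ v) = Bf m u v := by
  have h1 := polar h2 (A *ᵥ u) (A *ᵥ v)
  rw [← Matrix.mulVec_add, hQ, hQ, hQ, polar h2 u v] at h1
  exact (add_left_cancel h1).symm

lemma Bf_single_mid_left (c : F) (v : Fin (2 * m + 1) → F) :
    Bf m (Pi.single (mid m) c) v = 0 := by
  unfold Bf
  apply Finset.sum_eq_zero
  intro j _
  rw [Pi.single_eq_of_ne (lo_ne_mid j), Pi.single_eq_of_ne (hi_ne_mid j)]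
  ring


lemma single_eq_smul (a : Fin (2 * m + 1)) (c : F) :
    Pi.single a c = c • (Pi.single a 1 : Fin (2 * m + 1) → F) := by
  funext k
  simp only [Pi.smul_apply, Pi.single_apply, smul_eq_mul]
  split <;> simp

lemma Qodd_single_smul (A : Matrix (Fin (2 * m + 1)) (Fin (2 * m + 1)) F)
    (k : Fin (2 * m + 1))
    (hk : Qodd F m (A *ᵥ Pi.single k 1) = Qodd F m (Pi.single k 1)) (c : F) :
    Qodd F m (A *ᵥ Pi.single k c) = Qodd F m (Pi.single k c) := by
  rw [single_eq_smul, Matrix.mulVec_smul, Qodd_smul, Qodd_smul, hk]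

lemma Qpres_of_basis (h2 : (2 : F) = 0) (A : Matrix (Fin (2 * m + 1)) (Fin (2 * m + 1)) F)
    (hb : ∀ u v, Bf m (A *ᵥ u) (A *ᵥ v) = Bf m u v)
    (hd : ∀ k, Qodd F m (A *ᵥ Pi.single k 1) = Qodd F m (Pi.single k 1)) :
    ∀ v, Qodd F m (A *ᵥ v) = Qodd F m v := by
  suffices H : ∀ s : Finset (Fin (2 * m + 1)), ∀ v : Fin (2 * m + 1) → F,
      (∀ k ∉ s, v k = 0) → Qodd F m (A *ᵥ v) = Qodd F m v by
    intro v; exact H Finset.univ v (by simp)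
  intro s
  induction s using Finset.induction_on with
  | empty =>
    intro v hv
    have h0 : v = 0 := funext fun k => hv k (by simp)
    rw [h0, Matrix.mulVec_zero, Qodd_zero]
  | @insert a s ha ih =>
    intro v hv
    have hsupp : ∀ k ∉ s, Function.update v a 0 k = 0 := by
      intro k hk
      by_cases hka : k = a
      · subst hka; simp
      · rw [Function.update_of_ne hka]
        exact hv k (by simp [hka, hk])
    have hdecomp : v = Pi.single a (v a) + Function.update v a 0 := by
      funext k
      by_cases hk : k = a
      · subst hk; simp
      · simp [Pi.single_eq_of_ne hk, Function.update_of_ne hk]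
    rw [hdecomp]
    calc Qodd F m (A *ᵥ (Pi.single a (v a) + Function.update v a 0))
        = Qodd F m (A *ᵥ Pi.single a (v a)) + Qodd F m (A *ᵥ Function.update v a 0)
          + Bf m (A *ᵥ Pi.single a (v a)) (A *ᵥ Function.update v a 0) := by
          rw [Matrix.mulVec_add]; exact polar h2 _ _
      _ = Qodd F m (Pi.single a (v a)) + Qodd F m (Function.update v a 0)
          + Bf m (Pi.single a (v a)) (Function.update v a 0) := by
          rw [Qodd_single_smul A a (hd a), ih _ hsupp, hb]
      _ = Qodd F m (Pi.single a (v a) + Function.update v a 0) := (polar h2 _ _).symm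

lemma col_eq (A : Matrix (Fin (2 * m + 1)) (Fin (2 * m + 1)) F) (k : Fin (2 * m + 1)) :
    A *ᵥ Pi.single k (1 : F) = fun i => A i k := by
  rw [Matrix.mulVec_single]
  funext i
  exact mul_one _

lemma lo_injective {j j' : Fin m} (h : lo m j = lo m j') : j = j' :=
  Fin.ext (by have := congrArg Fin.val h; rwa [lo_val, lo_val] at this)

lemma hi_injective {j j' : Fin m} (h : hi m j = hi m j') : j = j' := by
  have := congrArg Fin.val h
  rw [hi_val, hi_val] at this
  have := j.isLt; have := j'.isLt
  exact Fin.ext (by omega)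

lemma Bf_single_hi (x : Fin (2 * m + 1) → F) (j : Fin m) :
    Bf m x (Pi.single (hi m j) 1) = x (lo m j) := by
  rw [Bf, Finset.sum_eq_single j]
  · rw [Pi.single_apply, Pi.single_apply, if_pos rfl, if_neg (lo_ne_hi j j)]; ring
  · intro j' _ hne
    rw [Pi.single_apply, Pi.single_apply, if_neg (fun hh => hne (hi_injective hh)),
      if_neg (lo_ne_hi j' j)]
    ring
  · intro h; exact absurd (Finset.mem_univ j) h

lemma Bf_single_lo (x : Fin (2 * m + 1) → F) (j : Fin m) :
    Bf m x (Pi.single (lo m j) 1) = x (hi m j) := by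
  rw [Bf, Finset.sum_eq_single j]
  · rw [Pi.single_apply, Pi.single_apply, if_pos rfl, if_neg (Ne.symm (lo_ne_hi j j))]; ring
  · intro j' _ hne
    rw [Pi.single_apply, Pi.single_apply, if_neg (fun hh => hne (lo_injective hh)),
      if_neg (Ne.symm (lo_ne_hi j j'))]
    ring
  · intro h; exact absurd (Finset.mem_univ j) h

lemma col_mid (h2 : (2 : F) = 0) (A : Matrix (Fin (2 * m + 1)) (Fin (2 * m + 1)) F)
    (hdet : A.det = 1) (hQ : ∀ v, Qodd F m (A *ᵥ v) = Qodd F m v) :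
    ∀ i, A i (mid m) = if i = mid m then 1 else 0 := by
  have hu : IsUnit A.det := by rw [hdet]; exact isUnit_one
  have hsur : ∀ w : Fin (2 * m + 1) → F, ∃ w', A *ᵥ w' = w := fun w =>
    ⟨A⁻¹ *ᵥ w, by rw [Matrix.mulVec_mulVec, Matrix.mul_nonsing_inv A hu, Matrix.one_mulVec]⟩
  have hrad : ∀ w, Bf m (fun i => A i (mid m)) w = 0 := by
    intro w
    obtain ⟨w', rfl⟩ := hsur w
    rw [← col_eq A (mid m), Bf_inv h2 A hQ, Bf_single_mid_left]
  have hoffl : ∀ j : Fin m, A (lo m j) (mid m) = 0 := by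
    intro j
    have h := hrad (Pi.single (hi m j) 1)
    rwa [Bf_single_hi] at h
  have hoffh : ∀ j : Fin m, A (hi m j) (mid m) = 0 := by
    intro j
    have h := hrad (Pi.single (lo m j) 1)
    rwa [Bf_single_lo] at h
  have hmm : A (mid m) (mid m) = 1 := by
    have h := hQ (Pi.single (mid m) 1)
    rw [col_eq, Qodd_def, Qodd_def] at h
    rw [Finset.sum_eq_zero (fun j _ => by rw [hoffl j]; ring),
      Finset.sum_eq_zero (fun j _ => by rw [Pi.single_eq_of_ne (lo_ne_mid j)]; ring),
      Pi.single_eq_same] at h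
    rw [add_zero, add_zero] at h
    exact sq_injF h2 (by rw [h, one_pow])
  intro i
  by_cases hmid : i = mid m
  · rw [if_pos hmid, hmid, hmm]
  · rw [if_neg hmid]
    have hv : (i : ℕ) ≠ m := fun hh => hmid (Fin.ext hh)
    have him := i.isLt
    rcases lt_or_ge (i : ℕ) m with hlt | hge
    · have : i = lo m ⟨(i : ℕ), hlt⟩ := Fin.ext rfl
      rw [this]; exact hoffl _
    · have : i = hi m ⟨2 * m - (i : ℕ), by omega⟩ := Fin.ext (by rw [hi_val]; simp only [Fin.val_mk]; omega)
      rw [this]; exact hoffh _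


/-- matrix of the polar form -/
def Nmat (F : Type*) [Field F] (m : ℕ) : Matrix (Fin (2 * m + 1)) (Fin (2 * m + 1)) F :=
  fun k l => if (k : ℕ) + (l : ℕ) = 2 * m ∧ (k : ℕ) ≠ m then 1 else 0

def sig (m : ℕ) (k : Fin (2 * m + 1)) : Fin (2 * m + 1) := ⟨2 * m - (k : ℕ), by omega⟩

lemma Nmat_row (k : Fin (2 * m + 1)) (y : Fin (2 * m + 1) → F) :
    ∑ l, Nmat F m k l * y l = if k = mid m then 0 else y (sig m k) := by
  have hk2 := k.isLt
  by_cases hk : k = mid m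
  · rw [if_pos hk]
    apply Finset.sum_eq_zero
    intro l _
    have : Nmat F m k l = 0 := by
      unfold Nmat
      rw [if_neg]
      rintro ⟨-, h2⟩
      exact h2 (by rw [hk]; rfl)
    rw [this, zero_mul]
  · rw [if_neg hk]
    have hkm : (k : ℕ) ≠ m := fun hh => hk (Fin.ext hh)
    have hrow : ∀ l, Nmat F m k l = if l = sig m k then 1 else 0 := by
      intro l
      unfold Nmat
      rcases eq_or_ne l (sig m k) with h | h
      · rw [if_pos h, if_pos]
        refine ⟨?_, hkm⟩
        rw [h]
        show (k : ℕ) + (2 * m - (k : ℕ)) = 2 * m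
        omega
      · rw [if_neg h, if_neg]
        rintro ⟨h1, -⟩
        exact h (Fin.ext (by show (l : ℕ) = 2 * m - (k : ℕ); omega))
    simp_rw [hrow, ite_mul, one_mul, zero_mul]
    rw [Finset.sum_ite_eq' Finset.univ (sig m k) y]
    simp

lemma sig_skip (l : Fin (2 * m)) : sig m (skipMid m l) = skipMid m (Fin.rev l) := by
  have := l.isLt
  apply Fin.ext
  show 2 * m - ((skipMid m l : Fin (2 * m + 1)) : ℕ) = _
  rw [skipMid_val, skipMid_val, Fin.val_rev]
  split_ifs <;> omega

lemma rev_mk_lo (j : Fin m) :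
    Fin.rev (⟨(j : ℕ), by omega⟩ : Fin (2 * m)) = ⟨2 * m - 1 - (j : ℕ), by omega⟩ :=
  Fin.ext (by rw [Fin.val_rev]; simp only [Fin.val_mk]; omega)

lemma rev_mk_hi (j : Fin m) :
    Fin.rev (⟨2 * m - 1 - (j : ℕ), by omega⟩ : Fin (2 * m)) = ⟨(j : ℕ), by omega⟩ :=
  Fin.ext (by rw [Fin.val_rev]; simp only [Fin.val_mk]; have := j.isLt; omega)

lemma Bf_skip (x y : Fin (2 * m + 1) → F) :
    Bf m x y = ∑ l : Fin (2 * m), x (skipMid m l) * y (skipMid m (Fin.rev l)) := by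
  rw [sum2m (f := fun l => x (skipMid m l) * y (skipMid m (Fin.rev l))), Bf]
  apply Finset.sum_congr rfl
  intro j _
  rw [rev_mk_lo, rev_mk_hi, skipA, skipB]

lemma Bf_eq_dot (x y : Fin (2 * m + 1) → F) :
    Bf m x y = x ⬝ᵥ (Nmat F m *ᵥ y) := by
  have hmv : ∀ k, (Nmat F m *ᵥ y) k = if k = mid m then 0 else y (sig m k) := fun k =>
    Nmat_row k y
  rw [dotProduct, sum_skip (f := fun k => x k * (Nmat F m *ᵥ y) k), Bf_skip]
  rw [hmv (mid m), if_pos rfl, mul_zero, zero_add]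
  apply Finset.sum_congr rfl
  intro l _
  rw [hmv, if_neg (skipMid_ne_mid l), sig_skip]

lemma Jsymp_apply (i j : Fin (2 * m)) :
    Jsymp F m i j = if j = Fin.rev i then 1 else 0 := by
  have hi2 := i.isLt
  have hj2 := j.isLt
  unfold Jsymp
  rcases eq_or_ne j (Fin.rev i) with h | h
  · rw [if_pos h, if_pos]
    rw [h, Fin.val_rev]
    omega
  · rw [if_neg h, if_neg]
    intro hc
    exact h (Fin.ext (by rw [Fin.val_rev]; omega))

lemma J_mul_apply (B : Matrix (Fin (2 * m)) (Fin (2 * m)) F) (a : Fin (2 * m)) (j : Fin (2 * m)) :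
    (Jsymp F m * B) a j = B (Fin.rev a) j := by
  rw [Matrix.mul_apply]
  simp_rw [Jsymp_apply, ite_mul, one_mul, zero_mul]
  rw [Finset.sum_ite_eq' Finset.univ (Fin.rev a) (fun b => B b j)]
  simp

lemma JJ : Jsymp F m * Jsymp F m = (1 : Matrix (Fin (2 * m)) (Fin (2 * m)) F) := by
  ext i j
  rw [J_mul_apply, Jsymp_apply, Fin.rev_rev, Matrix.one_apply]
  exact if_congr eq_comm rfl rfl

lemma symp_entry (B : Matrix (Fin (2 * m)) (Fin (2 * m)) F)
    (hB : Bᵀ * Jsymp F m * B = Jsymp F m) (i j : Fin (2 * m)) :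
    ∑ a, B a i * B (Fin.rev a) j = Jsymp F m i j := by
  conv_rhs => rw [← hB]
  rw [Matrix.mul_assoc, Matrix.mul_apply]
  exact Finset.sum_congr rfl fun a _ => by rw [Matrix.transpose_apply, J_mul_apply]

def unskip (m : ℕ) (hm : 1 ≤ m) (k : Fin (2 * m + 1)) : Fin (2 * m) :=
  if h : (k : ℕ) < m then ⟨(k : ℕ), by omega⟩ else ⟨(k : ℕ) - 1, by have := k.isLt; omega⟩

lemma unskip_val (hm : 1 ≤ m) (k : Fin (2 * m + 1)) :
    ((unskip m hm k : Fin (2 * m)) : ℕ) = if (k : ℕ) < m then (k : ℕ) else (k : ℕ) - 1 := by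
  unfold unskip; split <;> rfl

lemma unskip_skip (hm : 1 ≤ m) (i : Fin (2 * m)) : unskip m hm (skipMid m i) = i := by
  have := i.isLt
  apply Fin.ext
  rw [unskip_val, skipMid_val]
  split_ifs <;> omega

lemma skip_unskip (hm : 1 ≤ m) (k : Fin (2 * m + 1)) (hk : k ≠ mid m) :
    skipMid m (unskip m hm k) = k := by
  have := k.isLt
  have hkm : (k : ℕ) ≠ m := fun hh => hk (Fin.ext hh)
  apply Fin.ext
  rw [skipMid_val, unskip_val]
  split_ifs <;> omega


lemma skipMid_injective : Function.Injective (skipMid m) := by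
  intro a b h
  rw [skipMid_eq_succAbove, skipMid_eq_succAbove] at h
  exact (mid m).succAbove_right_injective h

lemma char2_of_even_card (F : Type*) [Field F] [Fintype F]
    (hq : Even (Fintype.card F)) : (2 : F) = 0 := by
  obtain ⟨p, hp⟩ := CharP.exists F
  haveI := hp
  obtain ⟨n, hprime, hcard⟩ := FiniteField.card F p
  have hdvd : (2 : ℕ) ∣ p ^ (n : ℕ) := by rw [← hcard]; exact hq.two_dvd
  have hp2 : p = 2 :=
    ((Nat.prime_dvd_prime_iff_eq Nat.prime_two hprime).mp
      (Nat.Prime.dvd_of_dvd_pow Nat.prime_two hdvd)).symm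
  have := CharP.cast_eq_zero F p
  rw [hp2] at this
  exact_mod_cast this

lemma row_mid_sq (A : Matrix (Fin (2 * m + 1)) (Fin (2 * m + 1)) F)
    (hQ : ∀ v, Qodd F m (A *ᵥ v) = Qodd F m v) (l : Fin (2 * m + 1)) (hl : l ≠ mid m)
    (h2 : (2 : F) = 0) :
    A (mid m) l ^ 2 = ∑ j : Fin m, A (lo m j) l * A (hi m j) l := by
  have h := hQ (Pi.single l 1)
  rw [col_eq, Qodd_def, Qodd_def] at h
  have hz : (Pi.single l 1 : Fin (2 * m + 1) → F) (mid m) ^ 2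
      + ∑ j : Fin m, (Pi.single l 1 : Fin (2 * m + 1) → F) (lo m j)
        * (Pi.single l 1 : Fin (2 * m + 1) → F) (hi m j) = 0 := by
    rw [Pi.single_eq_of_ne (fun hh => hl hh.symm)]
    rw [Finset.sum_eq_zero]
    · ring
    · intro j _
      by_cases hlo : lo m j = l
      · rw [Pi.single_eq_of_ne (fun hh : hi m j = l => (lo_ne_hi j j) (hlo.trans hh.symm))]
        ring
      · rw [Pi.single_eq_of_ne hlo]; ring
  rw [hz] at h
  linear_combination h - (∑ j : Fin m, A (lo m j) l * A (hi m j) l) * h2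

lemma Nmat_skip (i j : Fin (2 * m)) :
    Nmat F m (skipMid m i) (skipMid m j) = Jsymp F m i j := by
  have hi2 := i.isLt
  have hj2 := j.isLt
  have h1 := skipMid_val i
  have h2 := skipMid_val j
  unfold Nmat Jsymp
  have cond_iff : (((skipMid m i : Fin (2 * m + 1)) : ℕ) + ((skipMid m j : Fin (2 * m + 1)) : ℕ)
      = 2 * m ∧ ((skipMid m i : Fin (2 * m + 1)) : ℕ) ≠ m) ↔ ((i : ℕ) + (j : ℕ) = 2 * m - 1) := by
    rw [h1, h2]
    split_ifs <;> omega
  exact if_congr cond_iff rfl rfl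

lemma mapsTo_lemma (h2 : (2 : F) = 0) (A : Matrix (Fin (2 * m + 1)) (Fin (2 * m + 1)) F)
    (hdet : A.det = 1) (hQ : ∀ v, Qodd F m (A *ᵥ v) = Qodd F m v) :
    (removeMid m A)ᵀ * Jsymp F m * removeMid m A = Jsymp F m := by
  ext i j
  rw [Matrix.mul_assoc, Matrix.mul_apply]
  rw [Finset.sum_congr rfl (fun a _ => by
    rw [Matrix.transpose_apply, J_mul_apply] :
    ∀ a ∈ Finset.univ, (removeMid m A)ᵀ i a * (Jsymp F m * removeMid m A) a j
      = removeMid m A a i * removeMid m A (Fin.rev a) j)]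
  have hL : ∑ a, removeMid m A a i * removeMid m A (Fin.rev a) j
      = Bf m (fun k => A k (skipMid m i)) (fun k => A k (skipMid m j)) := by
    rw [Bf_skip]
    rfl
  rw [hL, ← col_eq A (skipMid m i), ← col_eq A (skipMid m j), Bf_inv h2 A hQ, Bf_skip]
  rw [Finset.sum_eq_single i]
  · rw [Pi.single_eq_same, one_mul, Pi.single_apply, Jsymp_apply]
    exact if_congr ⟨fun hh => (skipMid_injective hh).symm, fun hh => by rw [hh]⟩ rfl rfl
  · intro b _ hb
    rw [Pi.single_apply, if_neg (fun hh => hb (skipMid_injective hh)), zero_mul]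
  · intro h; exact absurd (Finset.mem_univ i) h

lemma det_removeMid (A : Matrix (Fin (2 * m + 1)) (Fin (2 * m + 1)) F)
    (hcol : ∀ i, A i (mid m) = if i = mid m then 1 else 0) :
    A.det = (removeMid m A).det := by
  rw [Matrix.det_succ_column A (mid m), Finset.sum_eq_single (mid m)]
  · rw [hcol (mid m), if_pos rfl, mul_one]
    have hpow : ((-1 : F)) ^ (((mid m : Fin (2 * m + 1)) : ℕ) + ((mid m : Fin (2 * m + 1)) : ℕ))
        = 1 := Even.neg_one_pow ⟨((mid m : Fin (2 * m + 1)) : ℕ), rfl⟩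
    rw [hpow, one_mul]
    have hsub : A.submatrix (mid m).succAbove (mid m).succAbove = removeMid m A := by
      ext i j
      rw [Matrix.submatrix_apply, ← skipMid_eq_succAbove, ← skipMid_eq_succAbove]
      rfl
    rw [hsub]
  · intro b _ hb
    rw [hcol b, if_neg hb]
    ring
  · intro h; exact absurd (Finset.mem_univ (mid m)) h

lemma det_symp (h2 : (2 : F) = 0) (B : Matrix (Fin (2 * m)) (Fin (2 * m)) F)
    (hB : Bᵀ * Jsymp F m * B = Jsymp F m) : B.det = 1 := by
  have hdetJ : (Jsymp F m).det * (Jsymp F m).det = 1 := by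
    rw [← Matrix.det_mul, JJ, Matrix.det_one]
  have hJ0 : (Jsymp F m).det ≠ 0 := fun h => by rw [h, mul_zero] at hdetJ; exact one_ne_zero hdetJ.symm
  have h := congrArg Matrix.det hB
  rw [Matrix.det_mul, Matrix.det_mul, Matrix.det_transpose] at h
  have h3 : (B.det * B.det) * (Jsymp F m).det = 1 * (Jsymp F m).det := by linear_combination h
  have hBB : B.det * B.det = 1 := mul_right_cancel₀ hJ0 h3
  exact sq_injF h2 (by rw [pow_two, hBB, one_pow])


lemma surj_piece [Fintype F] (h2 : (2 : F) = 0) (hm : 1 ≤ m)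
    (B : Matrix (Fin (2 * m)) (Fin (2 * m)) F)
    (hB : Bᵀ * Jsymp F m * B = Jsymp F m) :
    ∃ A : Matrix (Fin (2 * m + 1)) (Fin (2 * m + 1)) F,
      (A.det = 1 ∧ ∀ v, Qodd F m (A *ᵥ v) = Qodd F m v) ∧ removeMid m A = B := by
  have hex : ∀ l : Fin (2 * m), ∃ t : F,
      t ^ 2 = ∑ j : Fin m, B ⟨(j : ℕ), by omega⟩ l * B ⟨2 * m - 1 - (j : ℕ), by omega⟩ l :=
    fun l => sq_surjF h2 _
  choose r hr using hex
  set A : Matrix (Fin (2 * m + 1)) (Fin (2 * m + 1)) F := Matrix.of (fun k l =>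
    if (k : ℕ) = m then (if (l : ℕ) = m then 1 else r (unskip m hm l))
    else if (l : ℕ) = m then 0 else B (unskip m hm k) (unskip m hm l)) with hA
  have hmidval : ((mid m : Fin (2 * m + 1)) : ℕ) = m := rfl
  have hskipval : ∀ i : Fin (2 * m), ((skipMid m i : Fin (2 * m + 1)) : ℕ) ≠ m := by
    intro i
    rw [skipMid_val]
    have := i.isLt
    split <;> omega
  have hAcol : ∀ k, A k (mid m) = if k = mid m then 1 else 0 := by
    intro k
    simp only [hA, Matrix.of_apply]
    by_cases hk : (k : ℕ) = m
    · rw [if_pos hk, if_pos hmidval, if_pos (Fin.ext hk)]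
    · rw [if_neg hk, if_pos hmidval, if_neg (fun hh => hk (by rw [hh, hmidval]))]
  have hArow : ∀ l : Fin (2 * m), A (mid m) (skipMid m l) = r l := by
    intro l
    simp only [hA, Matrix.of_apply]
    rw [if_pos hmidval, if_neg (hskipval l), unskip_skip]
  have hAblk : ∀ k l : Fin (2 * m), A (skipMid m k) (skipMid m l) = B k l := by
    intro k l
    simp only [hA, Matrix.of_apply]
    rw [if_neg (hskipval k), if_neg (hskipval l), unskip_skip, unskip_skip]
  have hrm : removeMid m A = B := by
    ext i j
    exact hAblk i j
  have hGram : Aᵀ * (Nmat F m * A) = Nmat F m := by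
    ext k l
    rw [Matrix.mul_apply]
    have hNA : ∀ a, (Nmat F m * A) a l = if a = mid m then 0 else A (sig m a) l := fun a => by
      rw [Matrix.mul_apply]; exact Nmat_row a (fun b => A b l)
    have step : ∑ a, Aᵀ k a * (Nmat F m * A) a l
        = ∑ c : Fin (2 * m), A (skipMid m c) k * A (skipMid m (Fin.rev c)) l := by
      rw [Finset.sum_congr rfl (fun a _ => by rw [Matrix.transpose_apply, hNA a] :
        ∀ a ∈ Finset.univ, Aᵀ k a * (Nmat F m * A) a l
          = A a k * (if a = mid m then 0 else A (sig m a) l))]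
      rw [sum_skip (f := fun a => A a k * (if a = mid m then 0 else A (sig m a) l))]
      rw [if_pos rfl, mul_zero, zero_add]
      exact Finset.sum_congr rfl fun c _ => by rw [if_neg (skipMid_ne_mid c), sig_skip]
    rw [step]
    by_cases hk : k = mid m
    · subst hk
      rw [Finset.sum_eq_zero (fun c _ => by rw [hAcol, if_neg (skipMid_ne_mid c), zero_mul])]
      symm
      unfold Nmat
      rw [if_neg]
      rintro ⟨-, hne⟩
      exact hne hmidval
    · by_cases hl : l = mid m
      · subst hl
        rw [Finset.sum_eq_zero (fun c _ => by
          rw [hAcol, if_neg (skipMid_ne_mid (Fin.rev c)), mul_zero])]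
        symm
        unfold Nmat
        rw [if_neg]
        rintro ⟨h1, hne⟩
        rw [hmidval] at h1
        have := k.isLt
        exact hne (by omega)
      · rw [← skip_unskip hm k hk, ← skip_unskip hm l hl]
        rw [Finset.sum_congr rfl (fun c _ => by rw [hAblk, hAblk])]
        rw [Nmat_skip]
        exact symp_entry B hB _ _
  have hQA : ∀ v, Qodd F m (A *ᵥ v) = Qodd F m v := by
    apply Qpres_of_basis h2 A
    · intro u v
      rw [Bf_eq_dot, Bf_eq_dot, Matrix.mulVec_mulVec]
      calc (A *ᵥ u) ⬝ᵥ ((Nmat F m * A) *ᵥ v)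
          = (u ᵥ* Aᵀ) ⬝ᵥ ((Nmat F m * A) *ᵥ v) := by rw [Matrix.vecMul_transpose]
        _ = u ⬝ᵥ (Aᵀ *ᵥ ((Nmat F m * A) *ᵥ v)) := (Matrix.dotProduct_mulVec _ _ _).symm
        _ = u ⬝ᵥ (Nmat F m *ᵥ v) := by rw [Matrix.mulVec_mulVec, hGram]
    · intro k
      have hcol' : ∀ i, (A *ᵥ Pi.single k 1) i = A i k := fun i => by rw [col_eq]
      rw [Qodd_def, Qodd_def]
      simp only [hcol']
      by_cases hk : k = mid m
      · subst hk
        rw [hAcol (mid m), if_pos rfl, Pi.single_eq_same,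
          Finset.sum_eq_zero (fun j _ => by rw [hAcol (lo m j), if_neg (lo_ne_mid j), zero_mul]),
          Finset.sum_eq_zero (fun j _ => by
            rw [Pi.single_eq_of_ne (lo_ne_mid j), zero_mul] :
            ∀ j ∈ Finset.univ, (Pi.single (mid m) 1 : Fin (2 * m + 1) → F) (lo m j)
              * (Pi.single (mid m) 1 : Fin (2 * m + 1) → F) (hi m j) = 0)]
      · set k0 := unskip m hm k with hk0
        have hks : skipMid m k0 = k := skip_unskip hm k hk
        have e1 : A (mid m) k = r k0 := by rw [← hks, hArow]
        have e2 : ∀ j : Fin m, A (lo m j) k = B ⟨(j : ℕ), by omega⟩ k0 := fun j => by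
          rw [← hks, ← skipA j, hAblk]
        have e3 : ∀ j : Fin m, A (hi m j) k = B ⟨2 * m - 1 - (j : ℕ), by omega⟩ k0 := fun j => by
          rw [← hks, ← skipB j, hAblk]
        rw [e1, Finset.sum_congr rfl (fun j _ => by rw [e2 j, e3 j]), ← hr k0,
          Pi.single_eq_of_ne (fun hh => hk hh.symm),
          Finset.sum_eq_zero (fun j _ => ?_)]
        · linear_combination (r k0) ^ 2 * h2
        · by_cases hlo : lo m j = k
          · rw [Pi.single_eq_of_ne (fun hh : hi m j = k => (lo_ne_hi j j) (hlo.trans hh.symm)),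
              mul_zero]
          · rw [Pi.single_eq_of_ne hlo, zero_mul]
  refine ⟨A, ⟨?_, hQA⟩, hrm⟩
  rw [det_removeMid A hAcol, hrm]
  exact det_symp h2 B hB

end RmAux

/-- For even `q`, removing the middle row and column is a group isomorphism
`SO_{2m+1}(q) → Sp_{2m}(q)`: it is a multiplication-preserving bijection from
`{A : det A = 1, Q_{2m+1}(Av) = Q_{2m+1}(v)}` onto `{B : Bᵀ J_{2m} B = J_{2m}}`. -/
theorem removeMid_iso_SO_Sp (F : Type*) [Field F] [Fintype F]
    (hq : Even (Fintype.card F)) (m : ℕ) (hm : 1 ≤ m) :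
    Set.BijOn (removeMid m)
      {A : Matrix (Fin (2 * m + 1)) (Fin (2 * m + 1)) F |
        A.det = 1 ∧ ∀ v, Qodd F m (A *ᵥ v) = Qodd F m v}
      {B : Matrix (Fin (2 * m)) (Fin (2 * m)) F | Bᵀ * Jsymp F m * B = Jsymp F m} ∧
    ∀ A B : Matrix (Fin (2 * m + 1)) (Fin (2 * m + 1)) F,
      (A.det = 1 ∧ ∀ v, Qodd F m (A *ᵥ v) = Qodd F m v) →
      (B.det = 1 ∧ ∀ v, Qodd F m (B *ᵥ v) = Qodd F m v) →
      removeMid m (A * B) = removeMid m A * removeMid m B := by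

  have h2 : (2 : F) = 0 := RmAux.char2_of_even_card F hq
  constructor
  · refine ⟨?_, ?_, ?_⟩
    · intro A hA
      exact RmAux.mapsTo_lemma h2 A hA.1 hA.2
    · intro A hA A' hA' h
      obtain ⟨hdet, hQ⟩ := hA
      obtain ⟨hdet', hQ'⟩ := hA'
      have hcm := RmAux.col_mid h2 A hdet hQ
      have hcm' := RmAux.col_mid h2 A' hdet' hQ'
      have h1 : ∀ a b : Fin (2 * m), A (skipMid m a) (skipMid m b)
          = A' (skipMid m a) (skipMid m b) := fun a b => congrFun (congrFun h a) b
      ext k l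
      by_cases hl : l = RmAux.mid m
      · rw [hl, hcm k, hcm' k]
      · by_cases hk : k = RmAux.mid m
        · subst hk
          have hrs := RmAux.row_mid_sq A hQ l hl h2
          have hrs' := RmAux.row_mid_sq A' hQ' l hl h2
          have hsame : ∀ j : Fin m, A (RmAux.lo m j) l = A' (RmAux.lo m j) l
              ∧ A (RmAux.hi m j) l = A' (RmAux.hi m j) l := by
            intro j
            constructor
            · rw [← RmAux.skip_unskip hm l hl, ← RmAux.skipA j, h1]
            · rw [← RmAux.skip_unskip hm l hl, ← RmAux.skipB j, h1]
          have hsq2 : A (RmAux.mid m) l ^ 2 = A' (RmAux.mid m) l ^ 2 := by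
            rw [hrs, hrs']
            exact Finset.sum_congr rfl fun j _ => by rw [(hsame j).1, (hsame j).2]
          exact RmAux.sq_injF h2 hsq2
        · rw [← RmAux.skip_unskip hm k hk, ← RmAux.skip_unskip hm l hl]
          exact h1 _ _
    · intro B hB
      obtain ⟨A, hmem, hrm⟩ := RmAux.surj_piece h2 hm B hB
      exact ⟨A, hmem, hrm⟩
  · intro A A' hA hA'
    have hcm := RmAux.col_mid h2 A hA.1 hA.2
    ext i j
    show (A * A') (skipMid m i) (skipMid m j) = _
    rw [Matrix.mul_apply]
    rw [RmAux.sum_skip (f := fun k => A (skipMid m i) k * A' k (skipMid m j))]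
    rw [hcm (skipMid m i), if_neg (RmAux.skipMid_ne_mid i), zero_mul, zero_add]
    rw [Matrix.mul_apply]
    rfl
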